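/- Let s, t ≥ 4 both be even, and let W be a resolving set of C_s □ C_t with u ∈ W. If u' is the vertex diametral to u in C_s □ C_t (i.e., obtained from u by shifting the first coordinate by s/2 in C_s and the second coordinate by t/2 in C_t, so d(u,u') equals the diameter of C_s □ C_t), then (W − {u}) ∪ {u'} is also a resolving set of C_s □ C_t. -/

import Mathlib

open SimpleGraph

/-- `W` is a resolving set of `G`: every pair of distinct vertices is
distinguished by its distance to some vertex of `W`. -/
def IsResolving {V : Type*} (G : SimpleGraph V) (W : Set V) : Prop :=
  ∀ x y : V, x ≠ y → ∃ z ∈ W, G.dist x z ≠ G.dist y z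

namespace TorusAux

open SimpleGraph Walk
open Fin.CommRing

variable {n : ℕ}

lemma fin_sub_val (a b : Fin n) :
    (a - b).val = if b.val ≤ a.val then a.val - b.val else a.val + n - b.val := by
  have ha := a.isLt
  have hb := b.isLt
  rw [Fin.sub_def]
  simp only
  split
  · next h =>
    have h2 : n - b.val + a.val = n + (a.val - b.val) := by omega
    rw [h2, Nat.add_mod_left, Nat.mod_eq_of_lt (by omega)]
  · next h =>
    rw [Nat.mod_eq_of_lt (by omega)]
    omega

lemma fin_one_val [NeZero n] (hn : 2 ≤ n) : ((1 : Fin n)).val = 1 := by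
  rw [Fin.val_one']
  exact Nat.mod_eq_of_lt (by omega)

lemma adj_add_one [NeZero n] (hn : 2 ≤ n) (a : Fin n) : (cycleGraph n).Adj a (a + 1) := by
  rw [cycleGraph_adj']
  right
  have h : a + 1 - a = 1 := by ring
  rw [h, fin_one_val hn]

lemma exists_walk_add [NeZero n] (hn : 2 ≤ n) (a : Fin n) (k : ℕ) :
    ∃ w : (cycleGraph n).Walk a (a + (k : Fin n)), w.length ≤ k := by
  induction k with
  | zero =>
    rw [Nat.cast_zero, add_zero]
    exact ⟨Walk.nil, by simp⟩
  | succ k ih =>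
    obtain ⟨w, hw⟩ := ih
    have h1 : (((k + 1 : ℕ)) : Fin n) = (k : Fin n) + 1 := by push_cast; ring
    rw [h1, ← add_assoc]
    refine ⟨w.concat (adj_add_one hn _), ?_⟩
    rw [Walk.length_concat]
    omega

lemma cycle_exists_walk [NeZero n] (hn : 2 ≤ n) (a b : Fin n) :
    ∃ w : (cycleGraph n).Walk a b, w.length ≤ (b - a).val := by
  have h : a + (((b - a).val : ℕ) : Fin n) = b := by
    rw [Fin.cast_val_eq_self]; ring
  have h2 := exists_walk_add hn a ((b - a).val)
  rwa [h] at h2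

lemma cycle_connected (hn : 2 ≤ n) : (cycleGraph n).Connected := by
  have : NeZero n := ⟨by omega⟩
  have hne : Nonempty (Fin n) := ⟨⟨0, by omega⟩⟩
  exact ⟨fun a b => ⟨(cycle_exists_walk hn a b).choose⟩⟩

lemma neg_val' [NeZero n] (a : Fin n) : (-a).val = if a.val = 0 then 0 else n - a.val := by
  have h : -a = 0 - a := by ring
  rw [h, fin_sub_val]
  have := a.isLt
  simp only [Fin.val_zero]
  split_ifs <;> simp_all

lemma shift_min [NeZero n] (hn : 2 ≤ n) (x : Fin n) :
    min ((x + 1).val) ((-(x + 1)).val) ≤ min x.val ((-x).val) + 1 := by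
  have hx := x.isLt
  have h1 : ((x : Fin n) + 1).val = (x.val + 1) % n := by
    simp [Fin.add_def, fin_one_val hn]
  have h2 : (x.val + 1) % n = if x.val + 1 = n then 0 else x.val + 1 := by
    split
    · next h => rw [h, Nat.mod_self]
    · next h => exact Nat.mod_eq_of_lt (by omega)
  rw [neg_val', neg_val', h1, h2]
  split_ifs <;> omega

lemma cycle_min_le_length (hn : 2 ≤ n) {a b : Fin n} (w : (cycleGraph n).Walk a b) :
    min ((b - a).val) ((a - b).val) ≤ w.length := by
  have : NeZero n := ⟨by omega⟩
  induction w with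
  | nil => simp
  | @cons a c d h p ih =>
    rw [cycleGraph_adj'] at h
    rw [Walk.length_cons]
    rcases h with h | h
    · have hac : a - c = 1 := by
        apply Fin.ext; rw [h, fin_one_val hn]
      have e3 : d - a = -(-(d - c) + 1) := by rw [← hac]; ring
      have e4 : a - d = -(d - c) + 1 := by rw [← hac]; ring
      have key := shift_min hn (-(d - c))
      have hdd : - -(d - c) = d - c := by ring
      have hcb : c - d = -(d - c) := by ring
      rw [hdd] at key
      rw [hcb] at ih
      rw [e3, e4]
      omega
    · have hca : c - a = 1 := by
        apply Fin.ext; rw [h, fin_one_val hn]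
      have e3 : d - a = (d - c) + 1 := by rw [← hca]; ring
      have e4 : a - d = -((d - c) + 1) := by rw [← hca]; ring
      have key := shift_min hn (d - c)
      have hcb : c - d = -(d - c) := by ring
      rw [hcb] at ih
      rw [e3, e4]
      omega

lemma cycle_dist (hn : 2 ≤ n) (a b : Fin n) :
    (cycleGraph n).dist a b = min ((b - a).val) ((a - b).val) := by
  have : NeZero n := ⟨by omega⟩
  refine le_antisymm (le_min ?_ ?_) ?_
  · obtain ⟨w, hw⟩ := cycle_exists_walk hn a b
    exact (dist_le w).trans hw
  · rw [SimpleGraph.dist_comm]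
    obtain ⟨w, hw⟩ := cycle_exists_walk hn b a
    exact (dist_le w).trans hw
  · obtain ⟨w, hw⟩ := (cycle_connected hn).exists_walk_length_eq_dist a b
    rw [← hw]
    exact cycle_min_le_length hn w

lemma cycle_dist_antipodal (hn : 4 ≤ n) (he : Even n) (h2 : n / 2 < n) (a b : Fin n) :
    (cycleGraph n).dist a (b + ⟨n / 2, h2⟩) + (cycleGraph n).dist a b = n / 2 := by
  have : NeZero n := ⟨by omega⟩
  have hemod : n % 2 = 0 := Nat.even_iff.mp he
  rw [cycle_dist (by omega), cycle_dist (by omega)]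
  have hy := (b - a).isLt
  have e1 : b + ⟨n / 2, h2⟩ - a = (b - a) + ⟨n / 2, h2⟩ := by ring
  have e2 : a - (b + ⟨n / 2, h2⟩) = -((b - a) + ⟨n / 2, h2⟩) := by ring
  have e3 : a - b = -(b - a) := by ring
  have h1 : ((b - a) + (⟨n / 2, h2⟩ : Fin n)).val = ((b - a).val + n / 2) % n := by
    rw [Fin.add_def]
  have h4 : ((b - a).val + n / 2) % n =
      if (b - a).val + n / 2 < n then (b - a).val + n / 2 else (b - a).val - n / 2 := by
    split
    · next h => exact Nat.mod_eq_of_lt h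
    · next h =>
      have hh : (b - a).val + n / 2 - n = (b - a).val - n / 2 := by omega
      rw [← hh, Nat.mod_eq_sub_mod (by omega), Nat.mod_eq_of_lt (by omega)]
  rw [e1, e2, e3, neg_val', neg_val', h1, h4]
  split_ifs <;> omega

end TorusAux

section BoxDist

open SimpleGraph Walk

variable {α β : Type*} {G : SimpleGraph α} {H : SimpleGraph β}

lemma boxProd_min_le (hG : G.Connected) (hH : H.Connected) {x y : α × β}
    (w : (G □ H).Walk x y) : G.dist x.1 y.1 + H.dist x.2 y.2 ≤ w.length := by
  induction w with
  | nil => simp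
  | @cons a c d h p ih =>
    rw [boxProd_adj] at h
    rw [Walk.length_cons]
    rcases h with ⟨hadj, he⟩ | ⟨hadj, he⟩
    · have t1 := hG.dist_triangle (u := a.1) (v := c.1) (w := d.1)
      have h1 : G.dist a.1 c.1 = 1 := (dist_eq_one_iff_adj).mpr hadj
      rw [← he] at ih
      omega
    · have t1 := hH.dist_triangle (u := a.2) (v := c.2) (w := d.2)
      have h1 : H.dist a.2 c.2 = 1 := (dist_eq_one_iff_adj).mpr hadj
      rw [← he] at ih
      omega

lemma boxProd_dist (hG : G.Connected) (hH : H.Connected) (x y : α × β) :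
    (G □ H).dist x y = G.dist x.1 y.1 + H.dist x.2 y.2 := by
  obtain ⟨x1, x2⟩ := x
  obtain ⟨y1, y2⟩ := y
  refine le_antisymm ?_ ?_
  · obtain ⟨w1, h1⟩ := hG.exists_walk_length_eq_dist x1 y1
    obtain ⟨w2, h2⟩ := hH.exists_walk_length_eq_dist x2 y2
    have hle := dist_le ((w1.boxProdLeft H x2).append (w2.boxProdRight G y1))
    rw [Walk.length_append] at hle
    have l1 : (w1.boxProdLeft H x2).length = w1.length := Walk.length_map _ _
    have l2 : (w2.boxProdRight G y1).length = w2.length := Walk.length_map _ _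
    rw [l1, l2, h1, h2] at hle
    exact hle
  · obtain ⟨w, hw⟩ := (hG.boxProd hH).exists_walk_length_eq_dist (x1, x2) (y1, y2)
    rw [← hw]
    exact boxProd_min_le hG hH w

end BoxDist

/-- For even `s, t ≥ 4`: if `W` is a resolving set of `C_s □ C_t` containing `u`, and
`u'` is the vertex diametral to `u` (obtained by shifting the first coordinate by
`s/2` and the second by `t/2`), then `(W \ {u}) ∪ {u'}` is also a resolving set. -/
theorem torus_swap_antipodal (s t : ℕ) (hs : 4 ≤ s) (ht : 4 ≤ t)
    (hes : Even s) (het : Even t)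
    (W : Set (Fin s × Fin t))
    (hW : IsResolving (cycleGraph s □ cycleGraph t) W)
    (u : Fin s × Fin t) (hu : u ∈ W) :
    IsResolving (cycleGraph s □ cycleGraph t)
      ((W \ {u}) ∪ {(u.1 + ⟨s / 2, by omega⟩, u.2 + ⟨t / 2, by omega⟩)}) := by
  have hcs : (cycleGraph s).Connected := TorusAux.cycle_connected (by omega)
  have hct : (cycleGraph t).Connected := TorusAux.cycle_connected (by omega)
  have key : ∀ v : Fin s × Fin t,
      (cycleGraph s □ cycleGraph t).dist v
          (u.1 + ⟨s / 2, by omega⟩, u.2 + ⟨t / 2, by omega⟩)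
        + (cycleGraph s □ cycleGraph t).dist v u = s / 2 + t / 2 := by
    intro v
    rw [boxProd_dist hcs hct, boxProd_dist hcs hct]
    have k1 := TorusAux.cycle_dist_antipodal hs hes (by omega) v.1 u.1
    have k2 := TorusAux.cycle_dist_antipodal ht het (by omega) v.2 u.2
    dsimp only
    omega
  intro x y hxy
  obtain ⟨z, hz, hdz⟩ := hW x y hxy
  by_cases hzu : z = u
  · refine ⟨(u.1 + ⟨s / 2, by omega⟩, u.2 + ⟨t / 2, by omega⟩),
      Set.mem_union_right _ (Set.mem_singleton _), ?_⟩
    subst hzu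
    have k1 := key x
    have k2 := key y
    omega
  · exact ⟨z, Set.mem_union_left _ ⟨hz, hzu⟩, hdz⟩
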